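/- arXiv:1707.08736 — 3 statements merged into one kernel-verified Lean document; each statement's English description precedes it below -/
import Mathlib

section
/- Given a CGS-SPC G and its corresponding CGS-EPC G′ (constructed with the dummy agent * and turn variable), for every path λ′ of G′ starting in a state where turn is false, the sequence λ defined by λ[k] = λ′[2k] ∩ Φ for all k ∈ ℕ is a path of G, and moreover λ′[2k] ∩ Φ = λ′[2k+1] ∩ Φ for all k. -/
open Set
open scoped Classical

structure CGS (Agent : Type) (Atom : Type) where
  ctrl : Agent → Set Atom
  d : Agent → Set Atom → Set (Set Atom)
  trans : Set Atom → (Agent → Set Atom) → Set Atom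

namespace CGS

variable {Agent Atom : Type}

/-- Well-formedness: nonempty protocol, and actions only use controlled atoms. -/
def WF (G : CGS Agent Atom) : Prop :=
  (∀ i s, (G.d i s).Nonempty) ∧ (∀ i s a, a ∈ G.d i s → a ⊆ G.ctrl i)

/-- Exclusive propositional control: disjoint, complete, and the transition is union. -/
def IsEPC (G : CGS Agent Atom) : Prop :=
  Pairwise (fun i j => Disjoint (G.ctrl i) (G.ctrl j)) ∧
  (⋃ i, G.ctrl i) = Set.univ ∧
  ∀ s α, G.trans s α = ⋃ i, α i

def Act (G : CGS Agent Atom) (s : Set Atom) : Set (Agent → Set Atom) :=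
  {α | ∀ i, α i ∈ G.d i s}

def Succ (G : CGS Agent Atom) (s : Set Atom) : Set (Set Atom) :=
  {t | ∃ α ∈ G.Act s, G.trans s α = t}

def IsPath (G : CGS Agent Atom) (lam : ℕ → Set Atom) : Prop :=
  ∀ k, lam (k + 1) ∈ G.Succ (lam k)

def ValidStrat (G : CGS Agent Atom) (C : Set Agent)
    (σ : Agent → Set Atom → Set Atom) : Prop :=
  ∀ i ∈ C, ∀ s, σ i s ∈ G.d i s

def out (G : CGS Agent Atom) (C : Set Agent)
    (σ : Agent → Set Atom → Set Atom) (s : Set Atom) : Set (ℕ → Set Atom) :=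
  {lam | lam 0 = s ∧ ∀ k, ∃ α ∈ G.Act (lam k),
    (∀ i ∈ C, α i = σ i (lam k)) ∧ lam (k + 1) = G.trans (lam k) α}

end CGS

/-- ATL* (path) formulas. -/
inductive Form (Agent Atom : Type) : Type where
  | atom : Atom → Form Agent Atom
  | neg : Form Agent Atom → Form Agent Atom
  | disj : Form Agent Atom → Form Agent Atom → Form Agent Atom
  | next : Form Agent Atom → Form Agent Atom
  | untl : Form Agent Atom → Form Agent Atom → Form Agent Atom
  | coal : Set Agent → Form Agent Atom → Form Agent Atom

namespace Form

def size {Agent Atom : Type} : Form Agent Atom → ℕ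
  | atom _ => 1
  | neg φ => φ.size + 1
  | disj φ ψ => φ.size + ψ.size + 1
  | next φ => φ.size + 1
  | untl φ ψ => φ.size + ψ.size + 1
  | coal _ φ => φ.size + 1

end Form

/-- State formulas of ATL*. -/
inductive IsStateForm {Agent Atom : Type} : Form Agent Atom → Prop where
  | atom (p : Atom) : IsStateForm (.atom p)
  | neg {φ} : IsStateForm φ → IsStateForm (.neg φ)
  | disj {φ ψ} : IsStateForm φ → IsStateForm ψ → IsStateForm (.disj φ ψ)
  | coal (C : Set Agent) (φ : Form Agent Atom) : IsStateForm (.coal C φ)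

def shiftSeq {α : Type} (lam : ℕ → α) (n : ℕ) : ℕ → α := fun k => lam (k + n)

/-- Satisfaction of an ATL* path formula along a computation (memoryless strategies). -/
def psat {Agent Atom : Type} (G : CGS Agent Atom) :
    Form Agent Atom → (ℕ → Set Atom) → Prop
  | .atom p, lam => p ∈ lam 0
  | .neg φ, lam => ¬ psat G φ lam
  | .disj φ ψ, lam => psat G φ lam ∨ psat G ψ lam
  | .next φ, lam => psat G φ (shiftSeq lam 1)
  | .untl φ ψ, lam => ∃ n, psat G ψ (shiftSeq lam n) ∧ ∀ m < n, psat G φ (shiftSeq lam m)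
  | .coal C φ, lam => ∃ σ, G.ValidStrat C σ ∧ ∀ μ ∈ G.out C σ (lam 0), psat G φ μ

/-- Satisfaction of an ATL* state formula at a state. -/
def ssat {Agent Atom : Type} (G : CGS Agent Atom) (φ : Form Agent Atom)
    (s : Set Atom) : Prop :=
  psat G φ (fun _ => s)

/-- Atoms of the associated exclusive-control structure: Φ ∪ {turn} ∪ {c_{ip}}. -/
abbrev Atom2 (Agent Atom : Type) : Type := Atom ⊕ (Unit ⊕ Agent × Atom)

/-- Agents of the associated exclusive-control structure: N ∪ {*}. -/
abbrev Agent2 (Agent : Type) : Type := Agent ⊕ Unit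

def turnV {Agent Atom : Type} : Atom2 Agent Atom := Sum.inr (Sum.inl ())

def baseV {Agent Atom : Type} (p : Atom) : Atom2 Agent Atom := Sum.inl p

def cV {Agent Atom : Type} (i : Agent) (p : Atom) : Atom2 Agent Atom :=
  Sum.inr (Sum.inr (i, p))

/-- Restriction of a state of `G'` to the atoms of `G` (s' ∩ Φ). -/
def restr {Agent Atom : Type} (s' : Set (Atom2 Agent Atom)) : Set Atom :=
  {p | baseV (Agent := Agent) p ∈ s'}

/-- Canonical state: agrees with `s` on Φ, all other variables false. -/
def canonical {Agent Atom : Type} (s : Set Atom) : Set (Atom2 Agent Atom) :=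
  Sum.inl '' s

/-- Read off a `G`-joint action from the `c_{ip}` variables of a `G'`-state. -/
def readAct {Agent Atom : Type} (G : CGS Agent Atom) (s' : Set (Atom2 Agent Atom)) :
    Agent → Set Atom :=
  fun i => {p | p ∈ G.ctrl i ∧ cV i p ∈ s'}

/-- The CGS-EPC `G'` corresponding to a CGS-SPC `G` (Definition 5 of the paper). -/
noncomputable def epcOf {Agent Atom : Type} (G : CGS Agent Atom) :
    CGS (Agent2 Agent) (Atom2 Agent Atom) where
  ctrl := fun j =>
    match j with
    | Sum.inl i => {q | ∃ p ∈ G.ctrl i, q = cV i p}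
    | Sum.inr _ => insert turnV (Set.range (baseV (Agent := Agent) (Atom := Atom)))
  d := fun j s' =>
    match j with
    | Sum.inl i =>
        if turnV ∈ s' then {∅}
        else {a | ∃ α ∈ G.d i (restr s'), a = cV i '' α}
    | Sum.inr _ =>
        if turnV ∈ s' then {baseV '' G.trans (restr s') (readAct G s')}
        else {insert turnV (baseV '' restr s')}
  trans := fun _ α => ⋃ j, α j

/-- Joint `G'`-action (α'₁,…,α'ₙ,+turn) encoding a `G`-action α at state s'. -/
def encAct {Agent Atom : Type} (_G : CGS Agent Atom) (s' : Set (Atom2 Agent Atom))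
    (α : Agent → Set Atom) : Agent2 Agent → Set (Atom2 Agent Atom) :=
  fun j =>
    match j with
    | Sum.inl i => cV i '' α i
    | Sum.inr _ => insert turnV (baseV '' restr s')

/-- Joint `G'`-action (∅,…,∅, τ(s' ∩ Φ, α)) performing the aggregation. -/
def aggAct {Agent Atom : Type} (G : CGS Agent Atom) (s' : Set (Atom2 Agent Atom))
    (α : Agent → Set Atom) : Agent2 Agent → Set (Atom2 Agent Atom) :=
  fun j =>
    match j with
    | Sum.inl _ => ∅
    | Sum.inr _ => baseV '' G.trans (restr s') α

/-- Projection Π of a `G'`-path to a `G`-path: λ[k] = λ'[2k] ∩ Φ. -/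
def projPath {Agent Atom : Type} (lam' : ℕ → Set (Atom2 Agent Atom)) : ℕ → Set Atom :=
  fun k => restr (lam' (2 * k))

/-- Condition (†): λ[k] = λ'[2k] ∩ Φ = λ'[2k+1] ∩ Φ for all k. -/
def Corr {Agent Atom : Type} (lam : ℕ → Set Atom)
    (lam' : ℕ → Set (Atom2 Agent Atom)) : Prop :=
  ∀ k, restr (lam' (2 * k)) = lam k ∧ restr (lam' (2 * k + 1)) = lam k

/-- Canonical `G'`-path associated to a `G`-path. -/
def CanonPath {Agent Atom : Type} (G : CGS Agent Atom) (lam : ℕ → Set Atom)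
    (lam' : ℕ → Set (Atom2 Agent Atom)) : Prop :=
  (epcOf G).IsPath lam' ∧ lam' 0 = canonical (lam 0) ∧ Corr lam lam'

/-- The translation `tr`: replaces X by XX, commutes with everything else. -/
def trF {Agent Atom : Type} : Form Agent Atom → Form (Agent2 Agent) (Atom2 Agent Atom)
  | .atom p => .atom (baseV p)
  | .neg φ => .neg (trF φ)
  | .disj φ ψ => .disj (trF φ) (trF ψ)
  | .next φ => .next (.next (trF φ))
  | .untl φ ψ => .untl (trF φ) (trF ψ)
  | .coal C φ => .coal (Sum.inl '' C) (trF φ)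

lemma restr_baseV_image {Agent Atom : Type} (s : Set Atom) :
    restr (Agent := Agent) (baseV '' s) = s := by
  ext p; simp [restr, baseV]

lemma epc_step {Agent Atom : Type} (G : CGS Agent Atom) (hWF : G.WF)
    {s₀ s₁ s₂ : Set (Atom2 Agent Atom)}
    (h0 : turnV ∉ s₀)
    (h1 : s₁ ∈ (epcOf G).Succ s₀)
    (h2 : s₂ ∈ (epcOf G).Succ s₁) :
    ∃ α ∈ G.Act (restr s₀), restr s₁ = restr s₀ ∧
      s₂ = baseV '' G.trans (restr s₀) α ∧ turnV ∉ s₂ := by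
  obtain ⟨α', hα', hs₁⟩ := h1
  have hαi : ∀ i : Agent, ∃ a ∈ G.d i (restr s₀), α' (Sum.inl i) = cV i '' a := by
    intro i
    have := hα' (Sum.inl i)
    simpa [epcOf, CGS.Act, h0] using this
  choose α hαd hαe using hαi
  have hstar : α' (Sum.inr ()) = insert turnV (baseV '' restr s₀) := by
    have := hα' (Sum.inr ())
    simpa [epcOf, CGS.Act, h0] using this
  have hs₁' : s₁ = ⋃ j, α' j := by
    rw [← hs₁]; rfl
  -- membership characterization of s₁
  have hmem : ∀ x, x ∈ s₁ ↔ (∃ i p, p ∈ α i ∧ x = cV i p) ∨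
      x = turnV ∨ ∃ p ∈ restr s₀, x = baseV p := by
    intro x
    rw [hs₁']
    constructor
    · rintro ⟨S, ⟨j, rfl⟩, hx⟩
      cases j with
      | inl i =>
        simp only [hαe] at hx
        obtain ⟨p, hp, rfl⟩ := hx
        exact Or.inl ⟨i, p, hp, rfl⟩
      | inr u =>
        cases u
        simp only [hstar] at hx
        rcases hx with rfl | ⟨p, hp, rfl⟩
        · exact Or.inr (Or.inl rfl)
        · exact Or.inr (Or.inr ⟨p, hp, rfl⟩)
    · rintro (⟨i, p, hp, rfl⟩ | rfl | ⟨p, hp, rfl⟩)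
      · exact Set.mem_iUnion.2 ⟨Sum.inl i, by rw [hαe i]; exact ⟨p, hp, rfl⟩⟩
      · exact Set.mem_iUnion.2 ⟨Sum.inr (), by rw [hstar]; exact Set.mem_insert _ _⟩
      · exact Set.mem_iUnion.2 ⟨Sum.inr (), by rw [hstar]; exact Set.mem_insert_of_mem _ ⟨p, hp, rfl⟩⟩
  have hturn1 : turnV ∈ s₁ := (hmem turnV).2 (Or.inr (Or.inl rfl))
  have hrestr1 : restr s₁ = restr s₀ := by
    ext p
    simp only [restr, Set.mem_setOf_eq]
    rw [hmem]
    constructor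
    · rintro (⟨i, q, hq, h⟩ | h | ⟨q, hq, h⟩)
      · exact absurd h (by simp [baseV, cV])
      · exact absurd h (by simp [baseV, turnV])
      · obtain rfl : p = q := by simpa [baseV] using h
        exact hq
    · intro hp; exact Or.inr (Or.inr ⟨p, hp, rfl⟩)
  have hread : readAct G s₁ = α := by
    funext i
    ext p
    simp only [readAct, Set.mem_setOf_eq]
    rw [hmem]
    constructor
    · rintro ⟨hpc, (⟨j, q, hq, h⟩ | h | ⟨q, hq, h⟩)⟩
      · obtain ⟨rfl, rfl⟩ : i = j ∧ p = q := by simpa [cV, Prod.ext_iff, and_comm] using h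
        exact hq
      · exact absurd h (by simp [cV, turnV])
      · exact absurd h (by simp [cV, baseV])
    · intro hp
      exact ⟨hWF.2 i _ _ (hαd i) hp, Or.inl ⟨i, p, hp, rfl⟩⟩
  obtain ⟨β', hβ', hs₂⟩ := h2
  have hβstar : β' (Sum.inr ()) = baseV '' G.trans (restr s₁) (readAct G s₁) := by
    have := hβ' (Sum.inr ())
    simpa [epcOf, CGS.Act, hturn1] using this
  have hβi : ∀ i : Agent, β' (Sum.inl i) = ∅ := by
    intro i
    have := hβ' (Sum.inl i)
    simpa [epcOf, CGS.Act, hturn1] using this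
  have hs₂eq : s₂ = baseV '' G.trans (restr s₀) α := by
    rw [← hs₂]
    show (⋃ j, β' j) = _
    rw [← hread, ← hrestr1]
    apply Set.Subset.antisymm
    · rintro x ⟨S, ⟨j, rfl⟩, hx⟩
      cases j with
      | inl i => simp only [hβi] at hx; exact absurd hx (Set.notMem_empty x)
      | inr u => cases u; simpa only [hβstar] using hx
    · intro x hx
      exact Set.mem_iUnion.2 ⟨Sum.inr (), by rw [hβstar]; exact hx⟩
  refine ⟨α, hαd, hrestr1, hs₂eq, ?_⟩
  rw [hs₂eq]
  rintro ⟨p, _, h⟩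
  exact absurd h (by simp [baseV, turnV])

/-- Every path of `G'` starting with `turn` false projects
to a path of `G`, and even/odd states agree on Φ. -/
theorem path_of_epcOf_projects {Agent Atom : Type} (G : CGS Agent Atom)
    (hWF : G.WF) (lam' : ℕ → Set (Atom2 Agent Atom))
    (hpath : (epcOf G).IsPath lam')
    (hturn : turnV ∉ lam' 0) :
    G.IsPath (projPath lam') ∧
      ∀ k, restr (lam' (2 * k)) = restr (lam' (2 * k + 1)) := by
  have key : ∀ k, turnV ∉ lam' (2 * k) →
      ∃ α ∈ G.Act (restr (lam' (2 * k))),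
        restr (lam' (2 * k + 1)) = restr (lam' (2 * k)) ∧
        lam' (2 * k + 2) = baseV '' G.trans (restr (lam' (2 * k))) α ∧
        turnV ∉ lam' (2 * k + 2) := by
    intro k hk
    exact epc_step G hWF hk (hpath (2 * k)) (hpath (2 * k + 1))
  have hnoturn : ∀ k, turnV ∉ lam' (2 * k) := by
    intro k
    induction k with
    | zero => simpa using hturn
    | succ n ih =>
      obtain ⟨α, _, _, _, h⟩ := key n ih
      have : 2 * (n + 1) = 2 * n + 2 := by ring
      rw [this]; exact h
  constructor
  · intro k
    obtain ⟨α, hα, hr, he, _⟩ := key k (hnoturn k)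
    refine ⟨α, hα, ?_⟩
    show G.trans (restr (lam' (2 * k))) α = restr (lam' (2 * (k + 1)))
    have : 2 * (k + 1) = 2 * k + 2 := by ring
    rw [this, he, restr_baseV_image]
  · intro k
    obtain ⟨α, _, hr, _, _⟩ := key k (hnoturn k)
    exact hr.symm
end

section
/- Given a CGS-SPC G and its corresponding CGS-EPC G′, for every path λ of G there exists a path λ′ of G′ such that λ[k] = λ′[2k] ∩ Φ = λ′[2k+1] ∩ Φ for all k ∈ ℕ, and λ′[0] is the canonical state associated to λ[0] (the state agreeing with λ[0] on Φ and setting all variables outside Φ to false). -/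
open Set
open scoped Classical

lemma restr_canonical {Agent Atom : Type} (s : Set Atom) :
    restr (Agent := Agent) (canonical s) = s := by
  ext p
  simp [restr, canonical, baseV]

lemma turnV_not_mem_canonical {Agent Atom : Type} (s : Set Atom) :
    turnV (Agent := Agent) (Atom := Atom) ∉ canonical s := by
  intro h
  rcases h with ⟨p, -, hp⟩
  simp [baseV, turnV] at hp

/-- The odd-step intermediate state. -/
def midState {Agent Atom : Type} (s : Set Atom) (α : Agent → Set Atom) :
    Set (Atom2 Agent Atom) :=
  insert turnV (baseV '' s) ∪ ⋃ i, cV i '' α i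

lemma restr_midState {Agent Atom : Type} (s : Set Atom) (α : Agent → Set Atom) :
    restr (midState s α) = s := by
  ext p
  simp only [restr, midState, Set.mem_setOf_eq, Set.mem_union, Set.mem_insert_iff,
    Set.mem_image, Set.mem_iUnion]
  constructor
  · rintro (⟨h | ⟨q, hq, hqe⟩⟩ | ⟨i, q, hq, hqe⟩)
    · simp [baseV, turnV] at h
    · cases hqe; exact hq
    · simp [baseV, cV] at hqe
  · intro h; exact Or.inl (Or.inr ⟨p, h, rfl⟩)

lemma turnV_mem_midState {Agent Atom : Type} (s : Set Atom) (α : Agent → Set Atom) :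
    turnV ∈ midState s α := Or.inl (Set.mem_insert _ _)

lemma readAct_midState {Agent Atom : Type} (G : CGS Agent Atom) (s : Set Atom)
    (α : Agent → Set Atom) (hα : ∀ i, α i ⊆ G.ctrl i) :
    readAct G (midState s α) = α := by
  funext i
  ext p
  simp only [readAct, Set.mem_setOf_eq, midState, Set.mem_union, Set.mem_insert_iff,
    Set.mem_image, Set.mem_iUnion]
  constructor
  · rintro ⟨-, (h | ⟨q, hq, hqe⟩) | ⟨i', q, hq, hqe⟩⟩
    · simp [cV, turnV] at h
    · simp [cV, baseV] at hqe
    · simp only [cV, Sum.inr.injEq, Prod.mk.injEq] at hqe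
      obtain ⟨rfl, rfl⟩ := hqe
      exact hq
  · intro h
    exact ⟨hα i h, Or.inr ⟨i, p, h, rfl⟩⟩

/-- Every path of `G` lifts to a canonical associated path of `G'`. -/
theorem exists_canonical_lift {Agent Atom : Type} (G : CGS Agent Atom)
    (hWF : G.WF) (lam : ℕ → Set Atom) (hlam : G.IsPath lam) :
    ∃ lam' : ℕ → Set (Atom2 Agent Atom),
      (epcOf G).IsPath lam' ∧ lam' 0 = canonical (lam 0) ∧
      ∀ k, restr (lam' (2 * k)) = lam k ∧ restr (lam' (2 * k + 1)) = lam k := by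
  have hchoice : ∀ k, ∃ α, α ∈ G.Act (lam k) ∧ G.trans (lam k) α = lam (k + 1) := by
    intro k
    rcases hlam k with ⟨α, hα, ht⟩
    exact ⟨α, hα, ht⟩
  choose α hαAct hαtrans using hchoice
  have hsub : ∀ k i, α k i ⊆ G.ctrl i := fun k i => hWF.2 i (lam k) _ (hαAct k i)
  set lam' : ℕ → Set (Atom2 Agent Atom) := fun n =>
    if n % 2 = 0 then canonical (lam (n / 2)) else midState (lam (n / 2)) (α (n / 2))
    with hlam'
  have heven : ∀ k, lam' (2 * k) = canonical (lam k) := by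
    intro k; simp [hlam', Nat.mul_div_cancel_left, Nat.mul_mod_right]
  have hodd : ∀ k, lam' (2 * k + 1) = midState (lam k) (α k) := by
    intro k
    have h1 : (2 * k + 1) % 2 = 1 := by omega
    have h2 : (2 * k + 1) / 2 = k := by omega
    simp [hlam', h1, h2]
  refine ⟨lam', ?_, by simpa using heven 0, fun k => ⟨by rw [heven, restr_canonical],
    by rw [hodd, restr_midState]⟩⟩
  intro n
  rcases Nat.even_or_odd n with ⟨k, hk⟩ | ⟨k, hk⟩
  · -- n = 2k, step to 2k+1
    have hn : n = 2 * k := by omega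
    subst hn
    rw [heven, hodd]
    refine ⟨encAct G (canonical (lam k)) (α k), ?_, ?_⟩
    · intro j
      cases j with
      | inl i =>
          simp only [epcOf, encAct, CGS.d]
          rw [if_neg (turnV_not_mem_canonical _), restr_canonical]
          exact ⟨α k i, hαAct k i, rfl⟩
      | inr u =>
          simp only [epcOf, encAct, CGS.d]
          rw [if_neg (turnV_not_mem_canonical _), restr_canonical]
          rfl
    · simp only [epcOf, CGS.trans, midState]
      ext q
      simp only [Set.mem_iUnion, Set.mem_union, Set.mem_insert_iff, Set.mem_image]
      constructor
      · rintro ⟨j, hj⟩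
        cases j with
        | inl i =>
            simp only [encAct] at hj
            exact Or.inr ⟨i, by simpa using hj⟩
        | inr u =>
            simp only [encAct, restr_canonical] at hj
            exact Or.inl hj
      · rintro (h | h)
        · exact ⟨Sum.inr (), by simpa [encAct, restr_canonical] using h⟩
        · rcases h with ⟨i, x, hx, rfl⟩
          exact ⟨Sum.inl i, ⟨x, hx, rfl⟩⟩
  · -- n = 2k+1, step to 2k+2
    have hn : n = 2 * k + 1 := by omega
    subst hn
    have h2 : 2 * k + 1 + 1 = 2 * (k + 1) := by ring
    rw [hodd, h2, heven]
    refine ⟨aggAct G (midState (lam k) (α k)) (α k), ?_, ?_⟩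
    · intro j
      cases j with
      | inl i =>
          simp only [epcOf, aggAct, CGS.d]
          rw [if_pos (turnV_mem_midState _ _)]
          rfl
      | inr u =>
          simp only [epcOf, aggAct, CGS.d]
          rw [if_pos (turnV_mem_midState _ _), restr_midState,
            readAct_midState G _ _ (hsub k)]
          rfl
    · simp only [epcOf, CGS.trans]
      ext q
      simp only [Set.mem_iUnion]
      constructor
      · rintro ⟨j, hj⟩
        cases j with
        | inl i => simp [aggAct] at hj
        | inr u =>
            simp only [aggAct, restr_midState, hαtrans k] at hj
            exact hj
      · intro h
        exact ⟨Sum.inr (), by simpa [aggAct, restr_midState, hαtrans k, canonical, baseV] using h⟩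
end

section
/- In the CGS-EPC G′ corresponding to a CGS-SPC G, every state s′ reachable from a canonical state satisfies: if turn ∉ s′ then the joint actions enabled at s′ are exactly tuples (α′₁,…,α′ₙ, +turn) where α′ᵢ encodes an action αᵢ ∈ d(i, s′ ∩ Φ) of G, and if turn ∈ s′ then the unique joint action enabled at s′ is (∅,…,∅, τ(s′ ∩ Φ, α)) with αᵢ(p) = 1 iff c_{ip} ∈ s′. Consequently, along any G′-path from a canonical state, turn alternates: false at even indices and true at odd indices. -/
open Set
open scoped Classical

/-- Reachability from a canonical state in `G'`. -/
def ReachCanon {Agent Atom : Type} (G : CGS Agent Atom)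
    (s' : Set (Atom2 Agent Atom)) : Prop :=
  ∃ (s : Set Atom) (lam' : ℕ → Set (Atom2 Agent Atom)) (k : ℕ),
    (epcOf G).IsPath lam' ∧ lam' 0 = canonical s ∧ lam' k = s'

/-- characterisation of the enabled joint actions of `G'` at states
reachable from a canonical state, and alternation of `turn` along paths from
canonical states. -/
theorem epcOf_act_characterisation {Agent Atom : Type} (G : CGS Agent Atom)
    (hWF : G.WF) :
    (∀ s' : Set (Atom2 Agent Atom), ReachCanon G s' →
      (turnV ∉ s' →
        (epcOf G).Act s' =
          {α' | ∃ α : Agent → Set Atom,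
            (∀ i, α i ∈ G.d i (restr s')) ∧ α' = encAct G s' α}) ∧
      (turnV ∈ s' →
        (epcOf G).Act s' = {aggAct G s' (readAct G s')})) ∧
    (∀ lam' : ℕ → Set (Atom2 Agent Atom), (epcOf G).IsPath lam' →
      (∃ s : Set Atom, lam' 0 = canonical s) →
      ∀ k, turnV ∉ lam' (2 * k) ∧ turnV ∈ lam' (2 * k + 1)) := by
  have hturn_base : ∀ p : Atom, turnV (Agent := Agent) ≠ baseV p := by
    intro p h; simp [turnV, baseV] at h
  have hturn_c : ∀ (i : Agent) (p : Atom), turnV (Agent := Agent) (Atom := Atom) ≠ cV i p := by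
    intro i p h; simp [turnV, cV] at h
  constructor
  · intro s' _
    constructor
    · intro hturn
      ext α'
      simp only [CGS.Act, Set.mem_setOf_eq]
      constructor
      · intro h
        have hstar := h (Sum.inr ())
        have hi := fun i => h (Sum.inl i)
        simp only [epcOf, if_neg hturn, Set.mem_setOf_eq, Set.mem_singleton_iff] at hstar hi
        choose β hβ hβeq using hi
        refine ⟨β, hβ, ?_⟩
        funext j
        cases j with
        | inl i => exact hβeq i
        | inr u => cases u; simpa [encAct] using hstar
      · rintro ⟨α, hα, rfl⟩
        intro j
        cases j with
        | inl i =>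
          simp only [epcOf, if_neg hturn, Set.mem_setOf_eq, encAct]
          exact ⟨α i, hα i, rfl⟩
        | inr u => cases u; simp [epcOf, if_neg hturn, encAct]
    · intro hturn
      ext α'
      simp only [CGS.Act, Set.mem_setOf_eq, Set.mem_singleton_iff]
      constructor
      · intro h
        funext j
        cases j with
        | inl i =>
          have := h (Sum.inl i)
          simpa [epcOf, if_pos hturn, aggAct] using this
        | inr u =>
          cases u
          have := h (Sum.inr ())
          simpa [epcOf, if_pos hturn, aggAct] using this
      · rintro rfl j
        cases j with
        | inl i => simp [epcOf, if_pos hturn, aggAct]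
        | inr u => simp [epcOf, if_pos hturn, aggAct]
  · intro lam' hpath hcanon k
    obtain ⟨s, h0⟩ := hcanon
    have stepA : ∀ n, turnV ∉ lam' n → turnV ∈ lam' (n + 1) := by
      intro n hn
      obtain ⟨α', hα', htr⟩ := hpath n
      have hstar := hα' (Sum.inr ())
      simp only [epcOf, if_neg hn, Set.mem_singleton_iff] at hstar
      rw [← htr]
      have : turnV ∈ α' (Sum.inr ()) := by rw [hstar]; exact Set.mem_insert _ _
      exact Set.mem_iUnion.2 ⟨Sum.inr (), this⟩
    have stepB : ∀ n, turnV ∈ lam' n → turnV ∉ lam' (n + 1) := by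
      intro n hn
      obtain ⟨α', hα', htr⟩ := hpath n
      rw [← htr]
      intro hmem
      obtain ⟨j, hj⟩ := Set.mem_iUnion.1 hmem
      cases j with
      | inl i =>
        have := hα' (Sum.inl i)
        simp only [epcOf, if_pos hn, Set.mem_singleton_iff] at this
        rw [this] at hj
        exact hj
      | inr u =>
        cases u
        have := hα' (Sum.inr ())
        simp only [epcOf, if_pos hn, Set.mem_singleton_iff] at this
        rw [this] at hj
        obtain ⟨p, _, hp⟩ := hj
        exact hturn_base p hp.symm
    induction k with
    | zero =>
      have h00 : turnV ∉ lam' 0 := by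
        rw [h0]
        rintro ⟨p, _, hp⟩
        exact hturn_base p hp.symm
      exact ⟨by simpa using h00, by simpa using stepA 0 h00⟩
    | succ k ih =>
      have h1 : turnV ∈ lam' (2 * k + 1) := ih.2
      have h2 : turnV ∉ lam' (2 * k + 2) := stepB _ h1
      have h3 : turnV ∈ lam' (2 * k + 3) := stepA _ h2
      constructor
      · have : 2 * (k + 1) = 2 * k + 2 := by ring
        rw [this]; exact h2
      · have : 2 * (k + 1) + 1 = 2 * k + 3 := by ring
        rw [this]; exact h3
end
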